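/- Fix ε ∈ (0,1) and c > 0, and let t0 < t1 with τ := t1 − t0 satisfying: τ < ε·R_min²/c, τ < R_min/(2‖R'‖), and τ < 2√(1+√(1−ε²))·R_min/√‖(R²)''‖. Then the angular variation of the Dirichlet solution between the two bounces equals ∫_{t0}^{t1} c/r(t)² dt = π − arctan( cτ / √(R(t0)²R(t1)² − c²τ²) ). -/

import Mathlib

noncomputable section

/-- Sup-norm of a function (for a continuous 1-periodic function this is the maximum of `|f|`). -/
def supNorm (f : ℝ → ℝ) : ℝ := sSup (Set.range fun t => |f t|)

/-- Minimum value of `R` (attained for a continuous 1-periodic `R`). -/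
def Rmin (R : ℝ → ℝ) : ℝ := sInf (Set.range R)

/-- Maximum value of `R` (attained for a continuous 1-periodic `R`). -/
def Rmax (R : ℝ → ℝ) : ℝ := sSup (Set.range R)

/-- The constant `σ = min { R_min/(2‖R'‖) , 2√(1+√(1−ε²))·R_min/√‖(R²)''‖ }`. -/
def sigmaR (R : ℝ → ℝ) (ε : ℝ) : ℝ :=
  min (Rmin R / (2 * supNorm (deriv R)))
    (2 * Real.sqrt (1 + Real.sqrt (1 - ε ^ 2)) * Rmin R /
      Real.sqrt (supNorm (deriv (deriv (fun t => R t ^ 2)))))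

/-- `√(R(t0)²R(t1)² − c²(t1−t0)²)`. -/
def Ssq (R : ℝ → ℝ) (c t0 t1 : ℝ) : ℝ :=
  Real.sqrt (R t0 ^ 2 * R t1 ^ 2 - c ^ 2 * (t1 - t0) ^ 2)

/-- `A(t0,t1) = (R(t0)² + R(t1)² + 2√(R(t0)²R(t1)² − c²(t1−t0)²))/(t1−t0)²`. -/
def Afun (R : ℝ → ℝ) (c t0 t1 : ℝ) : ℝ :=
  (R t0 ^ 2 + R t1 ^ 2 + 2 * Ssq R c t0 t1) / (t1 - t0) ^ 2

/-- `B = −( t0 + (R(t0)² + √(R(t0)²R(t1)² − c²(t1−t0)²))/((t1−t0)·A) )`. -/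
def Bfun (R : ℝ → ℝ) (c t0 t1 : ℝ) : ℝ :=
  -(t0 + (R t0 ^ 2 + Ssq R c t0 t1) / ((t1 - t0) * Afun R c t0 t1))

/-- The Dirichlet solution `r(t) = √((A²(t+B)² + c²)/A)`. -/
def dirich (R : ℝ → ℝ) (c t0 t1 t : ℝ) : ℝ :=
  Real.sqrt ((Afun R c t0 t1 ^ 2 * (t + Bfun R c t0 t1) ^ 2 + c ^ 2) / Afun R c t0 t1)

/-- The generating function
`h(t0,t1) = ½(t1−t0)·A(t0,t1) + c·arctan( c(t1−t0)/√(R(t0)²R(t1)² − c²(t1−t0)²) )`. -/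
def hgen (R : ℝ → ℝ) (c t0 t1 : ℝ) : ℝ :=
  (1 / 2) * (t1 - t0) * Afun R c t0 t1 +
    c * Real.arctan (c * (t1 - t0) / Ssq R c t0 t1)

/-- `∂₁h`, the partial derivative of `h` in its first argument. -/
def d1h (R : ℝ → ℝ) (c t0 t1 : ℝ) : ℝ := deriv (fun s => hgen R c s t1) t0

/-- `∂₂h`, the partial derivative of `h` in its second argument. -/
def d2h (R : ℝ → ℝ) (c t0 t1 : ℝ) : ℝ := deriv (fun s => hgen R c t0 s) t1

/-- `∂₁₂h`, the mixed second partial derivative of `h`. -/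
def d12h (R : ℝ → ℝ) (c t0 t1 : ℝ) : ℝ := deriv (fun s => d1h R c t0 s) t1


private lemma aux_deriv_eq (A B c t : ℝ) (hA : 0 < A) (hc : 0 < c) :
    c / ((A ^ 2 * (t + B) ^ 2 + c ^ 2) / A) =
      1 / (1 + (A * (t + B) / c) ^ 2) * (A / c) := by
  have hd : (0:ℝ) < A ^ 2 * (t + B) ^ 2 + c ^ 2 := by positivity
  field_simp
  ring


private lemma aux_arctan (r0 r1 S c τ : ℝ) (hc : 0 < c) (hτ : 0 < τ) (hS : 0 < S)
    (h0 : 0 < r0) (h1 : 0 < r1) (hSsq : S ^ 2 = r0 ^ 2 * r1 ^ 2 - c ^ 2 * τ ^ 2) :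
    Real.arctan ((r1 ^ 2 + S) / (c * τ)) - Real.arctan (-((r0 ^ 2 + S) / (c * τ))) =
      Real.pi - Real.arctan (c * τ / S) := by
  have hcτ : 0 < c * τ := mul_pos hc hτ
  have hupos : 0 < (r0 ^ 2 + S) / (c * τ) := div_pos (add_pos (pow_pos h0 2) hS) hcτ
  have hvpos : 0 < (r1 ^ 2 + S) / (c * τ) := div_pos (add_pos (pow_pos h1 2) hS) hcτ
  have huv : 1 < (r1 ^ 2 + S) / (c * τ) * ((r0 ^ 2 + S) / (c * τ)) := by
    rw [div_mul_div_comm, lt_div_iff₀ (by positivity)]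
    nlinarith [mul_pos hS (pow_pos h0 2), mul_pos hS (pow_pos h1 2), mul_pos hS hS]
  rw [Real.arctan_neg, sub_neg_eq_add, Real.arctan_add_eq_add_pi huv hvpos]
  have hval : ((r1 ^ 2 + S) / (c * τ) + (r0 ^ 2 + S) / (c * τ)) /
      (1 - (r1 ^ 2 + S) / (c * τ) * ((r0 ^ 2 + S) / (c * τ))) = -(c * τ / S) := by
    have hne : (1:ℝ) - (r1 ^ 2 + S) / (c * τ) * ((r0 ^ 2 + S) / (c * τ)) ≠ 0 :=
      ne_of_lt (by linarith)
    rw [div_eq_iff hne]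
    field_simp
    linear_combination hSsq
  rw [hval, Real.arctan_neg]
  ring

/-- Under the time-gap conditions of Proposition 3.1 the angular variation
of the Dirichlet solution between the two bounces equals
`∫_{t0}^{t1} c/r(t)² dt = π − arctan( c(t1−t0)/√(R(t0)²R(t1)² − c²(t1−t0)²) )`. -/
theorem angular_variation_formula (R : ℝ → ℝ) (ε c t0 t1 : ℝ)
    (hC : ContDiff ℝ 2 R) (hper : ∀ t, R (t + 1) = R t) (hpos : ∀ t, 0 < R t)
    (hnc : ∃ a b, R a ≠ R b)
    (hε : ε ∈ Set.Ioo (0 : ℝ) 1) (hc : 0 < c) (ht : t0 < t1)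
    (hτ1 : t1 - t0 < ε * Rmin R ^ 2 / c)
    (hτ2 : t1 - t0 < Rmin R / (2 * supNorm (deriv R)))
    (hτ3 : t1 - t0 < 2 * Real.sqrt (1 + Real.sqrt (1 - ε ^ 2)) * Rmin R /
      Real.sqrt (supNorm (deriv (deriv (fun t => R t ^ 2))))) :
    ∫ t in t0..t1, c / dirich R c t0 t1 t ^ 2 =
      Real.pi - Real.arctan (c * (t1 - t0) / Ssq R c t0 t1) := by
  obtain ⟨hε0, hε1⟩ := hε
  have hτ : (0:ℝ) < t1 - t0 := sub_pos.2 ht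
  have hcont : Continuous R := hC.continuous
  have hp : Function.Periodic R 1 := hper
  -- minimum of R is positive and a lower bound
  obtain ⟨x, hx, hxmin⟩ := isCompact_Icc.exists_isMinOn (Set.nonempty_Icc.2 zero_le_one)
    (hcont.continuousOn : ContinuousOn R (Set.Icc (0:ℝ) 1))
  have hle : ∀ t, R x ≤ R t := by
    intro t
    have h1 : R t = R (Int.fract t) := by
      have := hp.sub_int_mul_eq (x := t) (n := ⌊t⌋)
      simp only [mul_one] at this
      exact this.symm
    rw [h1]
    exact hxmin ⟨Int.fract_nonneg t, (Int.fract_lt_one t).le⟩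
  have hRmin_eq : Rmin R = R x :=
    IsLeast.csInf_eq ⟨⟨x, rfl⟩, by rintro y ⟨t, rfl⟩; exact hle t⟩
  have hRmin_pos : 0 < Rmin R := hRmin_eq ▸ hpos x
  have hRmin_le0 : Rmin R ≤ R t0 := hRmin_eq ▸ hle t0
  have hRmin_le1 : Rmin R ≤ R t1 := hRmin_eq ▸ hle t1
  have h0 := hpos t0
  have h1 := hpos t1
  have hcτ : c * (t1 - t0) < Rmin R ^ 2 := by
    have h := (lt_div_iff₀ hc).1 hτ1
    nlinarith
  have hS2 : 0 < R t0 ^ 2 * R t1 ^ 2 - c ^ 2 * (t1 - t0) ^ 2 := by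
    have hmm : Rmin R * Rmin R ≤ R t0 * R t1 :=
      mul_le_mul hRmin_le0 hRmin_le1 hRmin_pos.le h0.le
    nlinarith [mul_pos hc hτ, sq_nonneg (R t0 * R t1 - c * (t1 - t0))]
  obtain ⟨S, hSdef⟩ : ∃ S', S' = Ssq R c t0 t1 := ⟨_, rfl⟩
  rw [← hSdef]
  have hSsq : S ^ 2 = R t0 ^ 2 * R t1 ^ 2 - c ^ 2 * (t1 - t0) ^ 2 := by
    rw [hSdef, Ssq]; exact Real.sq_sqrt hS2.le
  have hSpos : 0 < S := by rw [hSdef, Ssq]; exact Real.sqrt_pos.2 hS2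
  obtain ⟨A, hAdef⟩ : ∃ A', A' = Afun R c t0 t1 := ⟨_, rfl⟩
  have hAval : A = (R t0 ^ 2 + R t1 ^ 2 + 2 * S) / (t1 - t0) ^ 2 := by
    rw [hAdef, Afun, hSdef]
  have hApos : 0 < A := by
    rw [hAval]
    exact div_pos (by nlinarith) (by positivity)
  obtain ⟨B, hBdef⟩ : ∃ B', B' = Bfun R c t0 t1 := ⟨_, rfl⟩
  have hBval : B = -(t0 + (R t0 ^ 2 + S) / ((t1 - t0) * A)) := by
    rw [hBdef, Bfun, hSdef, hAdef]
  have hAt0 : A * (t0 + B) = -((R t0 ^ 2 + S) / (t1 - t0)) := by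
    rw [hBval]; field_simp; ring
  have hAt1 : A * (t1 + B) = (R t1 ^ 2 + S) / (t1 - t0) := by
    rw [hBval, hAval]; field_simp; ring
  -- the squared Dirichlet solution
  have hdir_sq : ∀ t, dirich R c t0 t1 t ^ 2 = (A ^ 2 * (t + B) ^ 2 + c ^ 2) / A := by
    intro t
    rw [dirich, ← hAdef, ← hBdef]
    exact Real.sq_sqrt (div_nonneg (by positivity) hApos.le)
  have hdpos : ∀ t, 0 < dirich R c t0 t1 t := by
    intro t
    rw [dirich, ← hAdef, ← hBdef]
    exact Real.sqrt_pos.2 (div_pos (by positivity) hApos)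
  -- continuity of the integrand
  have hdc : Continuous (dirich R c t0 t1) := by
    unfold dirich
    exact Real.continuous_sqrt.comp (by continuity)
  have hic : Continuous fun t => c / dirich R c t0 t1 t ^ 2 :=
    continuous_const.div (hdc.pow 2) fun t => pow_ne_zero 2 (hdpos t).ne'
  -- antiderivative
  have hderiv : ∀ t ∈ Set.uIcc t0 t1,
      HasDerivAt (fun t => Real.arctan (A * (t + B) / c)) (c / dirich R c t0 t1 t ^ 2) t := by
    intro t _
    have hlin : HasDerivAt (fun t => A * (t + B) / c) (A / c) t := by
      simpa using (((hasDerivAt_id t).add_const B).const_mul A).div_const c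
    have h2 := (Real.hasDerivAt_arctan (A * (t + B) / c)).comp t hlin
    rw [hdir_sq, aux_deriv_eq A B c t hApos hc]
    exact h2
  have hint : ∫ t in t0..t1, c / dirich R c t0 t1 t ^ 2 =
      Real.arctan (A * (t1 + B) / c) - Real.arctan (A * (t0 + B) / c) :=
    intervalIntegral.integral_eq_sub_of_hasDerivAt hderiv (hic.intervalIntegrable t0 t1)
  rw [hint, hAt0, hAt1]
  have e1 : -((R t0 ^ 2 + S) / (t1 - t0)) / c = -((R t0 ^ 2 + S) / (c * (t1 - t0))) := by
    rw [neg_div, div_div, mul_comm (t1 - t0) c]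
  have e2 : (R t1 ^ 2 + S) / (t1 - t0) / c = (R t1 ^ 2 + S) / (c * (t1 - t0)) := by
    rw [div_div, mul_comm (t1 - t0) c]
  rw [e1, e2]
  exact aux_arctan (R t0) (R t1) S c (t1 - t0) hc hτ hSpos h0 h1 hSsq
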